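/- Let G be a finite connected pruned graph and let G1 be a nonempty pruned subgraph of G with G1 ≠ G. Then ord(G1) < ord(G). -/

import Mathlib

open scoped Classical

structure Multigraph : Type 1 where
  V : Type
  E : Type
  fintypeV : Fintype V
  fintypeE : Fintype E
  head : E → V
  tail : E → V
  inv : E → E
  inv_inv : ∀ e, inv (inv e) = e
  tail_inv : ∀ e, tail (inv e) = head e

attribute [instance] Multigraph.fintypeV Multigraph.fintypeE

namespace Multigraph

noncomputable instance (G : Multigraph) : DecidableEq G.V := Classical.decEq _
noncomputable instance (G : Multigraph) : DecidableEq G.E := Classical.decEq _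

/-- The relation identifying a directed edge with its reversal; undirected
edges are the orbits of the involution, i.e. the classes of (the equivalence
closure of) this relation. -/
def edgeRel (G : Multigraph) (e f : G.E) : Prop := f = e ∨ f = G.inv e

/-- The number of undirected edges, `#E_G`. -/
noncomputable def edgeCard (G : Multigraph) : ℕ := Nat.card (Quot G.edgeRel)

/-- The order `ord(G) = #E_G - #V_G`. -/
noncomputable def ord (G : Multigraph) : ℤ :=
  (G.edgeCard : ℤ) - (Nat.card G.V : ℤ)

/-- The Euler characteristic `χ(G) = #V_G - #Edir_G / 2`. -/
noncomputable def eulerChar (G : Multigraph) : ℚ :=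
  (Nat.card G.V : ℚ) - (Nat.card G.E : ℚ) / 2

/-- The Hashimoto (non-backtracking) matrix. -/
noncomputable def hashimoto (G : Multigraph) : Matrix G.E G.E ℂ :=
  fun e f => if G.head e = G.tail f ∧ G.inv e ≠ f then 1 else 0

/-- `μ₁(G)`: the spectral radius of the Hashimoto matrix. -/
noncomputable def mu1 (G : Multigraph) : ℝ :=
  sSup {x : ℝ | ∃ z ∈ spectrum ℂ G.hashimoto, x = ‖z‖}

def Adj (G : Multigraph) (v w : G.V) : Prop :=
  ∃ e : G.E, G.tail e = v ∧ G.head e = w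

/-- `G` is connected: nonempty, and any two vertices are joined by a walk. -/
def Connected (G : Multigraph) : Prop :=
  Nonempty G.V ∧ ∀ v w : G.V, Relation.ReflTransGen G.Adj v w

/-- The degree of a vertex: the number of directed edges with head `v`. -/
noncomputable def degree (G : Multigraph) (v : G.V) : ℕ :=
  Nat.card {e : G.E // G.head e = v}

/-- A graph is pruned if every vertex has degree at least 2. -/
def Pruned (G : Multigraph) : Prop := ∀ v : G.V, 2 ≤ G.degree v

/-- A subgraph: subsets of vertices and directed edges, closed under the
involution and containing the endpoints of its directed edges. -/
structure Subgraph (G : Multigraph) where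
  verts : Set G.V
  edges : Set G.E
  inv_mem : ∀ e ∈ edges, G.inv e ∈ edges
  head_mem : ∀ e ∈ edges, G.head e ∈ verts
  tail_mem : ∀ e ∈ edges, G.tail e ∈ verts

/-- The multigraph underlying a subgraph. -/
noncomputable def Subgraph.graph {G : Multigraph} (S : G.Subgraph) : Multigraph where
  V := {v : G.V // v ∈ S.verts}
  E := {e : G.E // e ∈ S.edges}
  fintypeV := Fintype.ofFinite _
  fintypeE := Fintype.ofFinite _
  head := fun e => ⟨G.head e.1, S.head_mem e.1 e.2⟩
  tail := fun e => ⟨G.tail e.1, S.tail_mem e.1 e.2⟩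
  inv := fun e => ⟨G.inv e.1, S.inv_mem e.1 e.2⟩
  inv_inv := fun e => Subtype.ext (G.inv_inv e.1)
  tail_inv := fun e => Subtype.ext (G.tail_inv e.1)

/-- A subgraph is proper if it is not the whole graph. -/
def Subgraph.Proper {G : Multigraph} (S : G.Subgraph) : Prop :=
  S.verts ≠ Set.univ ∨ S.edges ≠ Set.univ

/-- Isomorphism of multigraphs. -/
structure Iso (G H : Multigraph) where
  vEquiv : G.V ≃ H.V
  eEquiv : G.E ≃ H.E
  map_head : ∀ e, H.head (eEquiv e) = vEquiv (G.head e)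
  map_tail : ∀ e, H.tail (eEquiv e) = vEquiv (G.tail e)
  map_inv : ∀ e, H.inv (eEquiv e) = eEquiv (G.inv e)

end Multigraph

/-- A `(≥ν,<r)`-tangle: a connected graph `ψ` with `μ₁(ψ) ≥ ν` and `ord(ψ) < r`. -/
def IsTangle (ν : ℝ) (r : ℤ) (ψ : Multigraph) : Prop :=
  ψ.Connected ∧ ν ≤ ψ.mu1 ∧ ψ.ord < r

/-- A minimal `(≥ν,<r)`-tangle: no proper subgraph is a `(≥ν,<r)`-tangle. -/
def IsMinimalTangle (ν : ℝ) (r : ℤ) (ψ : Multigraph) : Prop :=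
  IsTangle ν r ψ ∧ ∀ S : ψ.Subgraph, S.Proper → ¬ IsTangle ν r S.graph

namespace Multigraph

theorem head_inv' (G : Multigraph) (e : G.E) : G.head (G.inv e) = G.tail e := by
  have h := G.tail_inv (G.inv e)
  rw [G.inv_inv] at h; exact h.symm

theorem edgeRel_equivalence (G : Multigraph) : Equivalence G.edgeRel := by
  constructor
  · intro e; exact Or.inl rfl
  · rintro e f (rfl | rfl)
    · exact Or.inl rfl
    · exact Or.inr (G.inv_inv e).symm
  · rintro e f g h1 h2
    rcases h1 with rfl | rfl
    · exact h2
    · rcases h2 with rfl | rfl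
      · exact Or.inr rfl
      · rw [G.inv_inv]; exact Or.inl rfl

theorem quot_mk_eq_iff (G : Multigraph) (e f : G.E) :
    Quot.mk G.edgeRel e = Quot.mk G.edgeRel f ↔ G.edgeRel e f := by
  rw [Quot.eq]
  exact (G.edgeRel_equivalence).eqvGen_iff

end Multigraph

theorem pruned_proper_subgraph_order_lt (G : Multigraph)
    (hconn : G.Connected) (hpruned : G.Pruned)
    (G₁ : G.Subgraph) (hne : G₁.verts.Nonempty) (hp : G₁.graph.Pruned)
    (hproper : G₁.Proper) :
    G₁.graph.ord < G.ord := by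
  classical
  set Q := Quot G.edgeRel with hQdef
  set π : G.E → Q := Quot.mk G.edgeRel with hπdef
  set A : Q → Prop := fun q => ∃ e, e ∈ G₁.edges ∧ π e = q with hAdef
  have : Finite Q := Quot.finite _
  -- the subgraph's undirected edges biject with the classes in A
  have hA : G₁.graph.edgeCard = Nat.card {q : Q // A q} := by
    have hresp : ∀ (a b : {e : G.E // e ∈ G₁.edges}), G₁.graph.edgeRel a b →
        (⟨π a.val, ⟨a.val, a.2, rfl⟩⟩ : {q : Q // A q}) = ⟨π b.val, ⟨b.val, b.2, rfl⟩⟩ := by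
      rintro a b (rfl | h)
      · rfl
      · apply Subtype.ext
        apply Quot.sound
        right
        exact congrArg Subtype.val h
    refine Nat.card_eq_of_bijective
      (Quot.lift (fun e : {e : G.E // e ∈ G₁.edges} =>
        (⟨π e.val, ⟨e.val, e.2, rfl⟩⟩ : {q : Q // A q})) hresp) ⟨?_, ?_⟩
    · intro x y h
      obtain ⟨a, rfl⟩ := x.exists_rep
      obtain ⟨b, rfl⟩ := y.exists_rep
      have h2 : π a.val = π b.val := congrArg Subtype.val h
      have h3 := (G.quot_mk_eq_iff a.val b.val).mp h2
      apply Quot.sound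
      rcases h3 with h4 | h4
      · exact Or.inl (Subtype.ext h4)
      · exact Or.inr (Subtype.ext h4)
    · rintro ⟨q, e, he, rfl⟩
      exact ⟨Quot.mk _ ⟨e, he⟩, rfl⟩
  have hnotA : ∀ e : G.E, e ∉ G₁.edges → ¬ A (π e) := by
    rintro e he ⟨f, hf, hq⟩
    have h3 := (G.quot_mk_eq_iff f e).mp hq
    rcases h3 with rfl | rfl
    · exact he hf
    · exact he (G₁.inv_mem f hf)
  have hQcard : Nat.card Q = Nat.card {q : Q // A q} + Nat.card {q : Q // ¬ A q} := by
    rw [← Nat.card_sum]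
    exact Nat.card_congr (Equiv.sumCompl A).symm
  have hVcard : Nat.card G.V =
      Nat.card {v : G.V // v ∈ G₁.verts} + Nat.card {v : G.V // v ∉ G₁.verts} := by
    rw [← Nat.card_sum]
    exact Nat.card_congr (Equiv.sumCompl (fun v => v ∈ G₁.verts)).symm
  -- key inequality
  have hkey : Nat.card {v : G.V // v ∉ G₁.verts} + 1 ≤ Nat.card {q : Q // ¬ A q} := by
    by_cases hvu : G₁.verts = Set.univ
    · have hW : Nat.card {v : G.V // v ∉ G₁.verts} = 0 := by
        have : IsEmpty {v : G.V // v ∉ G₁.verts} :=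
          ⟨fun v => v.2 (Set.eq_univ_iff_forall.mp hvu v.1)⟩
        simp
      rcases hproper with h | h
      · exact absurd hvu h
      · obtain ⟨e0, he0⟩ := (Set.ne_univ_iff_exists_notMem _).mp h
        have : Nonempty {q : Q // ¬ A q} := ⟨⟨π e0, hnotA e0 he0⟩⟩
        have := Nat.card_pos (α := {q : Q // ¬ A q})
        omega
    · -- find a crossing edge
      obtain ⟨w0, hw0⟩ := (Set.ne_univ_iff_exists_notMem _).mp hvu
      obtain ⟨v0, hv0⟩ := hne
      have hcross : ∃ e0 : G.E, e0 ∉ G₁.edges ∧ G.head e0 ∈ G₁.verts := by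
        have hstep : ∀ w, Relation.ReflTransGen G.Adj v0 w → w ∉ G₁.verts →
            ∃ x, x ∈ G₁.verts ∧ ∃ e : G.E, G.tail e = x ∧ G.head e ∉ G₁.verts := by
          intro w h
          induction h with
          | refl => intro hw; exact absurd hv0 hw
          | @tail b c _ hbc ih =>
            intro hc
            by_cases hb : b ∈ G₁.verts
            · obtain ⟨e, he1, he2⟩ := hbc
              exact ⟨b, hb, e, he1, by rw [he2]; exact hc⟩
            · exact ih hb
        obtain ⟨x, hx, e, he1, he2⟩ := hstep w0 (hconn.2 v0 w0) hw0
        refine ⟨G.inv e, ?_, ?_⟩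
        · intro hmem
          exact he2 (G.tail_inv e ▸ G₁.tail_mem _ hmem)
        · rw [G.head_inv', he1]; exact hx
      obtain ⟨e0, he0, he0in⟩ := hcross
      -- two distinct edges per outside vertex
      have hdeg : ∀ w : {v : G.V // v ∉ G₁.verts}, ∃ x y : G.E, x ≠ y ∧
          G.head x = w.val ∧ G.head y = w.val := by
        intro w
        have h2 := hpruned w.val
        rw [Multigraph.degree] at h2
        have hnt : Nontrivial {e : G.E // G.head e = w.val} :=
          Finite.one_lt_card_iff_nontrivial.mp (by omega)
        obtain ⟨x, y, hxy⟩ := hnt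
        exact ⟨x.val, y.val, fun h => hxy (Subtype.ext h), x.2, y.2⟩
      choose a b hab ha hb using hdeg
      have hmemF : ∀ w : {v : G.V // v ∉ G₁.verts}, a w ∉ G₁.edges := by
        intro w hmem
        exact w.2 (ha w ▸ G₁.head_mem _ hmem)
      have hmemF' : ∀ w : {v : G.V // v ∉ G₁.verts}, b w ∉ G₁.edges := by
        intro w hmem
        exact w.2 (hb w ▸ G₁.head_mem _ hmem)
      have step1 : 2 * Nat.card {v : G.V // v ∉ G₁.verts} + 1 ≤
          Nat.card {e : G.E // e ∉ G₁.edges} := by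
        have hinj : Function.Injective
            (fun z : ({v : G.V // v ∉ G₁.verts} ⊕ {v : G.V // v ∉ G₁.verts}) ⊕ PUnit.{1} =>
            (match z with
              | .inl (.inl w) => ⟨a w, hmemF w⟩
              | .inl (.inr w) => ⟨b w, hmemF' w⟩
              | .inr _ => ⟨e0, he0⟩ : {e : G.E // e ∉ G₁.edges})) := by
          rintro ((w1 | w1) | u1) ((w2 | w2) | u2) h <;>
            (try cases u1) <;> (try cases u2) <;>
            simp only [Subtype.mk.injEq] at h ⊢
          · have hw : w1 = w2 := Subtype.ext (by rw [← ha w1, ← ha w2, h])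
            rw [hw]
          · have hw : w1 = w2 := Subtype.ext (by rw [← ha w1, ← hb w2, h])
            subst hw
            exact absurd h (hab w1)
          · exfalso; apply w1.2; rw [← ha w1, h]; exact he0in
          · have hw : w1 = w2 := Subtype.ext (by rw [← hb w1, ← ha w2, h])
            subst hw
            exact absurd h.symm (hab w1)
          · have hw : w1 = w2 := Subtype.ext (by rw [← hb w1, ← hb w2, h])
            rw [hw]
          · exfalso; apply w1.2; rw [← hb w1, h]; exact he0in
          · exfalso; apply w2.2; rw [← ha w2, ← h]; exact he0in
          · exfalso; apply w2.2; rw [← hb w2, ← h]; exact he0in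
        have := Nat.card_le_card_of_injective _ hinj
        simp only [Nat.card_sum] at this
        simp only [Nat.card_eq_fintype_card (α := PUnit.{1}), Fintype.card_punit] at this
        omega
      have step2 : Nat.card {e : G.E // e ∉ G₁.edges} ≤ 2 * Nat.card {q : Q // ¬ A q} := by
        let σ := Fintype.equivFin G.E
        have hinj : Function.Injective (fun e : {e : G.E // e ∉ G₁.edges} =>
            ((⟨π e.val, hnotA e.val e.2⟩ : {q : Q // ¬ A q}),
              decide (σ e.val ≤ σ (G.inv e.val)))) := by
          intro e f h
          have h1 : π e.val = π f.val := congrArg (fun p => p.1.val) h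
          have h2 : decide (σ e.val ≤ σ (G.inv e.val))
              = decide (σ f.val ≤ σ (G.inv f.val)) := congrArg Prod.snd h
          have h3 := (G.quot_mk_eq_iff e.val f.val).mp h1
          rcases h3 with h4 | h4
          · exact Subtype.ext h4.symm
          · have h5 : G.inv f.val = e.val := by rw [h4, G.inv_inv]
            rw [h4] at h2
            rw [G.inv_inv] at h2
            have h6 : (σ e.val ≤ σ (G.inv e.val)) ↔ (σ (G.inv e.val) ≤ σ e.val) := by
              constructor <;> intro hh
              · by_contra hcon
                simp [hh, hcon] at h2
              · by_contra hcon
                simp [hh, hcon] at h2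
            have h7 : σ e.val = σ (G.inv e.val) := by
              rcases le_total (σ e.val) (σ (G.inv e.val)) with hle | hle
              · exact le_antisymm hle (h6.mp hle)
              · exact le_antisymm (h6.mpr hle) hle
            have h8 : e.val = G.inv e.val := σ.injective h7
            apply Subtype.ext
            rw [h4, ← h8]
        have := Nat.card_le_card_of_injective _ hinj
        rw [Nat.card_prod] at this
        simp only [Nat.card_eq_fintype_card (α := Bool), Fintype.card_bool] at this
        omega
      omega
  -- conclude
  have hGE : G.edgeCard = Nat.card {q : Q // A q} + Nat.card {q : Q // ¬ A q} := hQcard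
  have hGV1 : Nat.card G₁.graph.V = Nat.card {v : G.V // v ∈ G₁.verts} := rfl
  simp only [Multigraph.ord]
  rw [hA, hGE, hVcard, hGV1]
  push_cast
  omega
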